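/- If G is a graph on n vertices with maximum degree Δ ≥ 2 satisfying the (r+d+1)-strong neighbourhood property for integers r ≥ 1 and d ≥ 1, then G admits an identification code with index r of size at most n(1 − c(d,r)/(Δ+1)^{(r+2)/d}), where c(d,r) = d(d+1)^{−1−1/d}(2r)^{−1/d}. Consequently, the minimum size θ_n of such a code satisfies n/(Δ+1) ≤ θ_n ≤ n(1 − c(d,r)/(Δ+1)^{(r+2)/d}). -/

import Mathlib

open Finset SimpleGraph

set_option linter.unusedSectionVars false
set_option maxHeartbeats 1000000

section ProbTools
variable {V : Type*} [Fintype V] [DecidableEq V]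

/-- weight of a subset for product Bernoulli(p) measure -/
noncomputable def Wt (p : ℝ) (S : Finset V) : ℝ :=
  p ^ S.card * (1 - p) ^ (Fintype.card V - S.card)

lemma sum_powerset_weights (A : Finset V) (p q : ℝ) :
    ∑ S ∈ A.powerset, p ^ S.card * q ^ (A.card - S.card) = (p + q) ^ A.card := by
  have h := Finset.prod_add (fun _ : V => p) (fun _ : V => q) A
  simp only [Finset.prod_const] at h
  rw [show ∑ S ∈ A.powerset, p ^ S.card * q ^ (A.card - S.card)
      = ∑ S ∈ A.powerset, p ^ S.card * q ^ (A \ S).card from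
    Finset.sum_congr rfl fun S hS => by
      rw [Finset.card_sdiff_of_subset (Finset.mem_powerset.mp hS)]]
  rw [← h]

lemma Wt_marginal (p : ℝ) (K : Finset V) :
    ∑ S ∈ (Finset.univ : Finset V).powerset, (if K ⊆ S then 1 else 0) * Wt p S
      = p ^ K.card := by
  classical
  simp only [ite_mul, one_mul, zero_mul]
  rw [← Finset.sum_filter]
  have hbij : ∑ S ∈ (Finset.univ : Finset V).powerset.filter (fun S => K ⊆ S), Wt p S
      = ∑ T ∈ ((Finset.univ : Finset V) \ K).powerset,
          p ^ K.card * (p ^ T.card * (1 - p) ^ ((Finset.univ \ K).card - T.card)) := by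
    refine Finset.sum_nbij' (fun S => S \ K) (fun T => T ∪ K) ?_ ?_ ?_ ?_ ?_
    · intro S hS
      simp only [Finset.mem_filter, Finset.mem_powerset] at hS ⊢
      exact Finset.sdiff_subset_sdiff hS.1 (Finset.Subset.refl _)
    · intro T hT
      simp only [Finset.mem_powerset, Finset.mem_filter] at hT ⊢
      exact ⟨Finset.subset_univ _, Finset.subset_union_right⟩
    · intro S hS
      simp only [Finset.mem_filter, Finset.mem_powerset] at hS
      exact Finset.sdiff_union_of_subset hS.2
    · intro T hT
      simp only [Finset.mem_powerset] at hT
      have hdisj : Disjoint T K := Finset.disjoint_of_subset_left hT Finset.sdiff_disjoint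
      rw [Finset.union_sdiff_cancel_right hdisj]
    · intro S hS
      simp only [Finset.mem_filter, Finset.mem_powerset] at hS
      unfold Wt
      have hKS : K.card ≤ S.card := Finset.card_le_card hS.2
      have hc : S.card = (S \ K).card + K.card := by
        rw [Finset.card_sdiff_of_subset hS.2]; omega
      have hc2 : Fintype.card V - S.card = (Finset.univ \ K).card - (S \ K).card := by
        rw [Finset.card_sdiff_of_subset (Finset.subset_univ K), Finset.card_sdiff_of_subset hS.2,
          Finset.card_univ]
        have := Finset.card_le_card (Finset.subset_univ S)
        rw [Finset.card_univ] at this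
        omega
      rw [hc2, hc, pow_add]
      ring
  rw [hbij, ← Finset.mul_sum, sum_powerset_weights]
  norm_num

lemma Wt_total (p : ℝ) :
    ∑ S ∈ (Finset.univ : Finset V).powerset, Wt p S = 1 := by
  have h := sum_powerset_weights (Finset.univ : Finset V) p (1 - p)
  simp only [Finset.card_univ] at h
  unfold Wt
  rw [h]
  norm_num

lemma Wt_nonneg {p : ℝ} (h0 : 0 ≤ p) (h1 : p ≤ 1) (S : Finset V) : 0 ≤ Wt p S :=
  mul_nonneg (pow_nonneg h0 _) (pow_nonneg (by linarith) _)

lemma Wt_pos {p : ℝ} (h0 : 0 < p) (h1 : p < 1) (S : Finset V) : 0 < Wt p S :=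
  mul_pos (pow_pos h0 _) (pow_pos (by linarith) _)

lemma card_as_sum (S : Finset V) :
    (S.card : ℝ) = ∑ v ∈ (Finset.univ : Finset V), (if {v} ⊆ S then (1:ℝ) else 0) := by
  simp only [Finset.singleton_subset_iff]
  rw [← Finset.sum_filter, Finset.filter_mem_eq_inter, Finset.univ_inter]
  simp

lemma Wt_card_expect (p : ℝ) :
    ∑ S ∈ (Finset.univ : Finset V).powerset, Wt p S * S.card
      = p * Fintype.card V := by
  have h : ∀ S ∈ (Finset.univ : Finset V).powerset,
      Wt p S * S.card = ∑ v ∈ (Finset.univ : Finset V),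
        (if {v} ⊆ S then (1:ℝ) else 0) * Wt p S := by
    intro S _
    rw [← Finset.sum_mul, ← card_as_sum, mul_comm]
  rw [Finset.sum_congr rfl h, Finset.sum_comm]
  have h2 : ∀ v ∈ (Finset.univ : Finset V),
      ∑ S ∈ (Finset.univ : Finset V).powerset, (if {v} ⊆ S then (1:ℝ) else 0) * Wt p S
        = p := by
    intro v _
    rw [Wt_marginal p ({v} : Finset V)]
    simp
  rw [Finset.sum_congr rfl h2, Finset.sum_const, Finset.card_univ]
  simp [mul_comm]

lemma Wt_tail {p : ℝ} (h0 : 0 ≤ p) (h1 : p ≤ 1) (T : Finset V) (m : ℕ) :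
    ∑ S ∈ (Finset.univ : Finset V).powerset,
        Wt p S * (if m ≤ (T ∩ S).card then (1:ℝ) else 0)
      ≤ (T.card.choose m : ℝ) * p ^ m := by
  have step1 : ∀ S ∈ (Finset.univ : Finset V).powerset,
      Wt p S * (if m ≤ (T ∩ S).card then (1:ℝ) else 0)
        ≤ ∑ K ∈ Finset.powersetCard m T, (if K ⊆ S then (1:ℝ) else 0) * Wt p S := by
    intro S _
    by_cases hb : m ≤ (T ∩ S).card
    · simp only [hb, if_true, mul_one]
      obtain ⟨K, hKsub, hKcard⟩ := Finset.exists_subset_card_eq hb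
      have hKmem : K ∈ Finset.powersetCard m T :=
        Finset.mem_powersetCard.mpr ⟨hKsub.trans Finset.inter_subset_left, hKcard⟩
      have hKS : K ⊆ S := hKsub.trans Finset.inter_subset_right
      calc Wt p S = (if K ⊆ S then (1:ℝ) else 0) * Wt p S := by rw [if_pos hKS, one_mul]
        _ ≤ ∑ K' ∈ Finset.powersetCard m T, (if K' ⊆ S then (1:ℝ) else 0) * Wt p S := by
            refine Finset.single_le_sum
              (f := fun K' => (if K' ⊆ S then (1:ℝ) else 0) * Wt p S) (fun K' _ => ?_) hKmem
            by_cases h : K' ⊆ S <;> simp [h, Wt_nonneg h0 h1 S]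
    · simp only [hb, if_false, mul_zero]
      refine Finset.sum_nonneg fun K' _ => ?_
      by_cases h : K' ⊆ S <;> simp [h, Wt_nonneg h0 h1 S]
  calc ∑ S ∈ (Finset.univ : Finset V).powerset,
        Wt p S * (if m ≤ (T ∩ S).card then (1:ℝ) else 0)
      ≤ ∑ S ∈ (Finset.univ : Finset V).powerset,
          ∑ K ∈ Finset.powersetCard m T, (if K ⊆ S then (1:ℝ) else 0) * Wt p S :=
        Finset.sum_le_sum step1
    _ = ∑ K ∈ Finset.powersetCard m T,
          ∑ S ∈ (Finset.univ : Finset V).powerset, (if K ⊆ S then (1:ℝ) else 0) * Wt p S :=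
        Finset.sum_comm
    _ = ∑ K ∈ Finset.powersetCard m T, p ^ K.card :=
        Finset.sum_congr rfl fun K _ => Wt_marginal p K
    _ = ∑ K ∈ Finset.powersetCard m T, p ^ m :=
        Finset.sum_congr rfl fun K hK => by
          rw [(Finset.mem_powersetCard.mp hK).2]
    _ = (T.card.choose m : ℝ) * p ^ m := by
        rw [Finset.sum_const, Finset.card_powersetCard, nsmul_eq_mul]

end ProbTools

theorem stmt_11 {V : Type*} [Fintype V] [DecidableEq V]
    (G : SimpleGraph V) [DecidableRel G.Adj] (r d : ℕ) (hr : 1 ≤ r) (hd : 1 ≤ d)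
    (hΔ : 2 ≤ G.maxDegree)
    (hstrong : ∀ u v : V, u ≠ v →
      r + d + 1 ≤ ((insert v (G.neighborFinset v)) \ (insert u (G.neighborFinset u))).card) :
    (∃ C : Finset V,
        (∀ u v : V, u ≠ v →
          r ≤ (((insert v (G.neighborFinset v)) \ (insert u (G.neighborFinset u))) ∩ C).card) ∧
        (C.card : ℝ) ≤ (Fintype.card V : ℝ) *
          (1 - ((d:ℝ) * ((d:ℝ) + 1) ^ (-(1:ℝ) - 1 / d) * (2 * (r:ℝ)) ^ (-(1:ℝ) / d)) /
                ((G.maxDegree : ℝ) + 1) ^ (((r:ℝ) + 2) / d))) ∧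
      (∀ C : Finset V,
        (∀ u v : V, u ≠ v →
          r ≤ (((insert v (G.neighborFinset v)) \ (insert u (G.neighborFinset u))) ∩ C).card) →
        (Fintype.card V : ℝ) / ((G.maxDegree : ℝ) + 1) ≤ (C.card : ℝ)) := by
  classical
  -- notation
  set n := Fintype.card V with hn
  set Nv : V → Finset V := fun v => insert v (G.neighborFinset v) with hNv
  set Dn : ℕ := G.maxDegree + 1 with hDn
  -- basic facts
  have hNvcard : ∀ v, (Nv v).card ≤ Dn := by
    intro v
    calc (Nv v).card ≤ (G.neighborFinset v).card + 1 := Finset.card_insert_le _ _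
      _ = G.degree v + 1 := by rw [G.card_neighborFinset_eq_degree]
      _ ≤ Dn := by have := G.degree_le_maxDegree v; omega
  have hNvsymm : ∀ x y : V, x ∈ Nv y → y ∈ Nv x := by
    intro x y hxy
    simp only [hNv, Finset.mem_insert, SimpleGraph.mem_neighborFinset] at hxy ⊢
    rcases hxy with h | h
    · exact Or.inl h.symm
    · exact Or.inr h.symm
  have hself : ∀ v : V, v ∈ Nv v := fun v => Finset.mem_insert_self _ _
  -- V has at least 3 vertices
  have hNonempty : Nonempty V := by
    rcases isEmpty_or_nonempty V with h | h
    · exfalso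
      have : G.maxDegree ≤ 0 := G.maxDegree_le_of_forall_degree_le 0 (fun v => h.elim v)
      omega
    · exact h
  have hV3 : 3 ≤ n := by
    have := G.maxDegree_lt_card_verts
    omega
  have hex : ∀ v : V, ∃ u : V, u ≠ v := by
    intro v
    exact Fintype.exists_ne_of_one_lt_card (by omega) v
  have hNvbig : ∀ v, r + d + 1 ≤ (Nv v).card := by
    intro v
    obtain ⟨u, hu⟩ := hex v
    exact le_trans (hstrong u v hu) (Finset.card_le_card (Finset.sdiff_subset))
  constructor
  · -- upper bound: existence of a small code
    set Dr : ℝ := (G.maxDegree : ℝ) + 1 with hDr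
    have hMD0 : (0:ℝ) ≤ (G.maxDegree : ℝ) := by positivity
    have hDr1 : (1:ℝ) ≤ Dr := by rw [hDr]; linarith
    have hDr0 : (0:ℝ) < Dr := by linarith
    have hDnDr : (Dn : ℝ) = Dr := by rw [hDn, hDr]; push_cast; ring
    have hdpos : (0:ℝ) < (d:ℝ) := by exact_mod_cast hd
    have hrpos : (0:ℝ) < (r:ℝ) := by exact_mod_cast hr
    have hd1pos : (0:ℝ) < (d:ℝ) + 1 := by linarith
    set A : ℝ := ((d:ℝ)+1) * (2*(r:ℝ)) * Dr^(r+1) with hA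
    have hDrpow1 : (1:ℝ) ≤ Dr^(r+1) := one_le_pow₀ hDr1
    have hd1 : (1:ℝ) ≤ (d:ℝ) := by exact_mod_cast hd
    have hr1 : (1:ℝ) ≤ (r:ℝ) := by exact_mod_cast hr
    have hA1 : (1:ℝ) < A := by
      rw [hA]
      have hmm : (2:ℝ)*(2:ℝ)*(1:ℝ) ≤ ((d:ℝ)+1)*(2*(r:ℝ))*Dr^(r+1) := by
        refine mul_le_mul (mul_le_mul (by linarith) (by linarith) (by norm_num)
          (by linarith)) hDrpow1 (by norm_num) (by positivity)
      linarith
    have hA0 : (0:ℝ) < A := by linarith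
    set p : ℝ := A ^ (-(1:ℝ)/((d:ℝ)+1)) with hp
    have hp0 : 0 < p := Real.rpow_pos_of_pos hA0 _
    have hxneg : -(1:ℝ)/((d:ℝ)+1) < 0 := by
      rw [neg_div]
      simp only [neg_neg, Left.neg_neg_iff]
      positivity
    have hp1 : p < 1 := Real.rpow_lt_one_of_one_lt_of_neg hA1 hxneg
    have hApow : p^(d+1) = A⁻¹ := by
      rw [hp, ← Real.rpow_natCast (A ^ (-(1:ℝ)/((d:ℝ)+1))) (d+1), ← Real.rpow_mul hA0.le]
      rw [show ((((d+1 : ℕ)) : ℝ)) = (d:ℝ)+1 from by push_cast; ring]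
      rw [div_mul_cancel₀ (-1 : ℝ) hd1pos.ne']
      rw [Real.rpow_neg_one]
    have hpkey : (r:ℝ) * Dr^(r+1) * p^(d+1) = 1/(2*((d:ℝ)+1)) := by
      rw [hApow, hA]
      have hD0 : (0:ℝ) < Dr^(r+1) := pow_pos hDr0 _
      field_simp
    -- events
    set ball2 : V → Finset V := fun v => (Nv v).biUnion Nv with hball
    set Tst : V → V → Finset V := fun v u => if u = v then Nv v else Nv v \ Nv u with hTst
    set ev : Finset ((_ : V) × V) := Finset.univ.sigma (fun v => ball2 v) with hev
    have hTbig : ∀ v u, r + d + 1 ≤ (Tst v u).card := by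
      intro v u
      by_cases h : u = v
      · show r + d + 1 ≤ (if u = v then Nv v else Nv v \ Nv u).card
        rw [if_pos h]
        exact hNvbig v
      · show r + d + 1 ≤ (if u = v then Nv v else Nv v \ Nv u).card
        rw [if_neg h]
        exact hstrong u v h
    have hTsub : ∀ v u, Tst v u ⊆ Nv v := by
      intro v u
      by_cases h : u = v
      · show (if u = v then Nv v else Nv v \ Nv u) ⊆ Nv v
        rw [if_pos h]
      · show (if u = v then Nv v else Nv v \ Nv u) ⊆ Nv v
        rw [if_neg h]
        exact Finset.sdiff_subset
    have hTcard : ∀ v u, (Tst v u).card ≤ Dn :=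
      fun v u => le_trans (Finset.card_le_card (hTsub v u)) (hNvcard v)
    have hevcard : ev.card ≤ n * (Dn * Dn) := by
      rw [hev, Finset.card_sigma]
      calc ∑ v ∈ (Finset.univ : Finset V), (ball2 v).card
          ≤ ∑ v ∈ (Finset.univ : Finset V), Dn * Dn := by
            refine Finset.sum_le_sum fun v _ => ?_
            calc (ball2 v).card ≤ ∑ w ∈ Nv v, (Nv w).card := Finset.card_biUnion_le
              _ ≤ ∑ w ∈ Nv v, Dn := Finset.sum_le_sum fun w _ => hNvcard w
              _ = (Nv v).card * Dn := by rw [Finset.sum_const, smul_eq_mul]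
              _ ≤ Dn * Dn := Nat.mul_le_mul_right _ (hNvcard v)
        _ = n * (Dn * Dn) := by rw [Finset.sum_const, smul_eq_mul, Finset.card_univ]
    -- the bad-event indicator
    set bd : ((_ : V) × V) → Finset V → ℝ := fun e S =>
      if (Tst e.1 e.2).card - r + 1 ≤ ((Tst e.1 e.2) ∩ S).card then 1 else 0 with hbd
    have hbd_nonneg : ∀ e S, 0 ≤ bd e S := by
      intro e S
      rw [hbd]
      by_cases h : (Tst e.1 e.2).card - r + 1 ≤ ((Tst e.1 e.2) ∩ S).card <;> simp [h]
    -- expectation bound per event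
    have hEbd : ∀ e ∈ ev, ∑ S ∈ (Finset.univ : Finset V).powerset, Wt p S * bd e S
        ≤ Dr^(r-1) * p^(d+2) := by
      intro e _
      have htail := Wt_tail hp0.le hp1.le (Tst e.1 e.2) ((Tst e.1 e.2).card - r + 1)
      refine le_trans htail ?_
      have htr : r + d + 1 ≤ (Tst e.1 e.2).card := hTbig _ _
      have hchoose : (Tst e.1 e.2).card.choose ((Tst e.1 e.2).card - r + 1)
          = (Tst e.1 e.2).card.choose (r-1) := by
        rw [← Nat.choose_symm (show (Tst e.1 e.2).card - r + 1 ≤ (Tst e.1 e.2).card by omega)]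
        congr 1
        omega
      have hcb : ((Tst e.1 e.2).card.choose ((Tst e.1 e.2).card - r + 1) : ℝ) ≤ Dr^(r-1) := by
        rw [hchoose]
        calc (((Tst e.1 e.2).card.choose (r-1) : ℕ) : ℝ)
            ≤ (((Tst e.1 e.2).card ^ (r-1) : ℕ) : ℝ) := by
              exact_mod_cast Nat.choose_le_pow _ _
          _ = (((Tst e.1 e.2).card : ℕ) : ℝ)^(r-1) := by push_cast; ring
          _ ≤ Dr^(r-1) := by
              refine pow_le_pow_left₀ (by positivity) ?_ _
              rw [← hDnDr]
              exact_mod_cast hTcard _ _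
      have hpm : p^((Tst e.1 e.2).card - r + 1) ≤ p^(d+2) :=
        pow_le_pow_of_le_one hp0.le hp1.le (by omega)
      exact mul_le_mul hcb hpm (by positivity) (by positivity)
    -- expectation of the objective
    set X : Finset V → ℝ := fun S => (S.card : ℝ) - (r:ℝ) * ∑ e ∈ ev, bd e S with hX
    set tgt : ℝ := p * (n:ℝ) * ((d:ℝ)/((d:ℝ)+1)) with htgt
    have hEX : tgt ≤ ∑ S ∈ (Finset.univ : Finset V).powerset, Wt p S * X S := by
      have hsplit : ∑ S ∈ (Finset.univ : Finset V).powerset, Wt p S * X S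
          = (∑ S ∈ (Finset.univ : Finset V).powerset, Wt p S * S.card)
            - (r:ℝ) * ∑ e ∈ ev, ∑ S ∈ (Finset.univ : Finset V).powerset, Wt p S * bd e S := by
        have hterm : ∀ S ∈ (Finset.univ : Finset V).powerset, Wt p S * X S
            = Wt p S * S.card - ∑ e ∈ ev, (r:ℝ) * (Wt p S * bd e S) := by
          intro S _
          rw [hX]
          simp only []
          rw [mul_sub, ← mul_assoc, Finset.mul_sum]
          congr 1
          refine Finset.sum_congr rfl fun e _ => ?_
          ring
        rw [Finset.sum_congr rfl hterm, Finset.sum_sub_distrib]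
        congr 1
        rw [Finset.sum_comm, Finset.mul_sum]
        refine Finset.sum_congr rfl fun e _ => ?_
        rw [Finset.mul_sum]
      rw [hsplit, Wt_card_expect]
      have hsum2 : ∑ e ∈ ev, ∑ S ∈ (Finset.univ : Finset V).powerset, Wt p S * bd e S
          ≤ (ev.card : ℝ) * (Dr^(r-1) * p^(d+2)) := by
        calc ∑ e ∈ ev, ∑ S ∈ (Finset.univ : Finset V).powerset, Wt p S * bd e S
            ≤ ∑ _e ∈ ev, Dr^(r-1) * p^(d+2) := Finset.sum_le_sum hEbd
          _ = (ev.card : ℝ) * (Dr^(r-1) * p^(d+2)) := by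
              rw [Finset.sum_const, nsmul_eq_mul]
      have hev2 : (ev.card : ℝ) ≤ (n:ℝ) * (Dr * Dr) := by
        have := hevcard
        have h2 : ((ev.card : ℕ) : ℝ) ≤ ((n * (Dn * Dn) : ℕ) : ℝ) := by exact_mod_cast this
        calc (ev.card : ℝ) ≤ ((n * (Dn * Dn) : ℕ) : ℝ) := h2
          _ = (n:ℝ) * ((Dn:ℝ) * (Dn:ℝ)) := by push_cast; ring
          _ = (n:ℝ) * (Dr * Dr) := by rw [hDnDr]
      have hbig : (r:ℝ) * ∑ e ∈ ev, ∑ S ∈ (Finset.univ : Finset V).powerset, Wt p S * bd e S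
          ≤ (n:ℝ) * p * (1/(2*((d:ℝ)+1))) := by
        have e1 : Dr^(r-1) * Dr^2 = Dr^(r+1) := by
          rw [← pow_add]
          congr 1
          omega
        have step : (r:ℝ) * ∑ e ∈ ev, ∑ S ∈ (Finset.univ : Finset V).powerset, Wt p S * bd e S
            ≤ (r:ℝ) * (((n:ℝ) * (Dr * Dr)) * (Dr^(r-1) * p^(d+2))) := by
          refine mul_le_mul_of_nonneg_left ?_ hrpos.le
          calc ∑ e ∈ ev, ∑ S ∈ (Finset.univ : Finset V).powerset, Wt p S * bd e S
              ≤ (ev.card : ℝ) * (Dr^(r-1) * p^(d+2)) := hsum2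
            _ ≤ ((n:ℝ) * (Dr * Dr)) * (Dr^(r-1) * p^(d+2)) := by
                refine mul_le_mul_of_nonneg_right hev2 (by positivity)
        refine le_trans step (le_of_eq ?_)
        rw [← hpkey, ← e1]
        rw [show p^(d+2) = p^(d+1) * p from by rw [← pow_succ]]
        ring
      -- combine
      have hnn : (0:ℝ) ≤ p * (n:ℝ) := by positivity
      have hkey2 : (d:ℝ)/((d:ℝ)+1) ≤ 1 - 1/(2*((d:ℝ)+1)) := by
        rw [div_le_iff₀ hd1pos]
        have hexp : (1 - 1/(2*((d:ℝ)+1)))*((d:ℝ)+1) = (d:ℝ) + 1/2 := by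
          field_simp
          ring
        rw [hexp]
        linarith
      have : tgt ≤ p * (n:ℝ) - (n:ℝ) * p * (1/(2*((d:ℝ)+1))) := by
        rw [htgt]
        have := mul_le_mul_of_nonneg_left hkey2 hnn
        calc p * (n:ℝ) * ((d:ℝ)/((d:ℝ)+1)) ≤ p * (n:ℝ) * (1 - 1/(2*((d:ℝ)+1))) := this
          _ = p * (n:ℝ) - (n:ℝ) * p * (1/(2*((d:ℝ)+1))) := by ring
      linarith
    -- pick a good S
    have hexS : ∃ S ∈ (Finset.univ : Finset V).powerset, tgt ≤ X S := by
      by_contra hcon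
      push_neg at hcon
      have hlt : ∑ S ∈ (Finset.univ : Finset V).powerset, Wt p S * X S
          < ∑ S ∈ (Finset.univ : Finset V).powerset, Wt p S * tgt := by
        refine Finset.sum_lt_sum_of_nonempty
          ⟨∅, Finset.mem_powerset.mpr (Finset.empty_subset _)⟩ ?_
        intro S hS
        exact mul_lt_mul_of_pos_left (hcon S hS) (Wt_pos hp0 hp1 S)
      rw [← Finset.sum_mul, Wt_total, one_mul] at hlt
      linarith
    obtain ⟨S, _, hXS⟩ := hexS
    -- repair
    choose rep hrepsub hrepcard using
      fun (A' : Finset V) => Finset.exists_subset_card_eq (min_le_right r A'.card)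
    set Rem : Finset V := ev.biUnion (fun e =>
      if (Tst e.1 e.2).card - r + 1 ≤ ((Tst e.1 e.2) ∩ S).card
      then rep ((Tst e.1 e.2) ∩ S) else ∅) with hRem
    set S' : Finset V := S \ Rem with hS'
    refine ⟨Finset.univ \ S', ?_, ?_⟩
    · -- validity
      intro u v huv
      obtain ⟨e, hemem, hTeq⟩ : ∃ e ∈ ev, Tst e.1 e.2 = Nv v \ Nv u := by
        by_cases hcap : (Nv v ∩ Nv u).Nonempty
        · obtain ⟨w, hw⟩ := hcap
          rw [Finset.mem_inter] at hw
          refine ⟨⟨v, u⟩, ?_, ?_⟩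
          · rw [hev, Finset.mem_sigma]
            exact ⟨Finset.mem_univ _,
              Finset.mem_biUnion.mpr ⟨w, hw.1, hNvsymm w u hw.2⟩⟩
          · show (if u = v then Nv v else Nv v \ Nv u) = Nv v \ Nv u
            rw [if_neg huv]
        · refine ⟨⟨v, v⟩, ?_, ?_⟩
          · rw [hev, Finset.mem_sigma]
            exact ⟨Finset.mem_univ _, Finset.mem_biUnion.mpr ⟨v, hself v, hself v⟩⟩
          · show (if v = v then Nv v else Nv v \ Nv v) = Nv v \ Nv u
            rw [if_pos rfl]
            have hdisj : Disjoint (Nv v) (Nv u) :=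
              Finset.disjoint_iff_inter_eq_empty.mpr
                (Finset.not_nonempty_iff_eq_empty.mp hcap)
            exact (Finset.sdiff_eq_self_of_disjoint hdisj).symm
      have hT1 : r + d + 1 ≤ (Tst e.1 e.2).card := hTbig _ _
      have key : ((Tst e.1 e.2) ∩ S').card ≤ (Tst e.1 e.2).card - r := by
        by_cases hbad : (Tst e.1 e.2).card - r + 1 ≤ ((Tst e.1 e.2) ∩ S).card
        · have hrepRem : rep ((Tst e.1 e.2) ∩ S) ⊆ Rem := by
            have hsb : (if (Tst e.1 e.2).card - r + 1 ≤ ((Tst e.1 e.2) ∩ S).card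
                then rep ((Tst e.1 e.2) ∩ S) else ∅) ⊆ Rem := by
              rw [hRem]
              exact Finset.subset_biUnion_of_mem (fun e' =>
                if (Tst e'.1 e'.2).card - r + 1 ≤ ((Tst e'.1 e'.2) ∩ S).card
                then rep ((Tst e'.1 e'.2) ∩ S) else ∅) hemem
            rw [if_pos hbad] at hsb
            exact hsb
          have hsub : (Tst e.1 e.2) ∩ S' ⊆ ((Tst e.1 e.2) ∩ S) \ rep ((Tst e.1 e.2) ∩ S) := by
            intro x hx
            rw [Finset.mem_inter, hS', Finset.mem_sdiff] at hx
            rw [Finset.mem_sdiff, Finset.mem_inter]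
            exact ⟨⟨hx.1, hx.2.1⟩, fun hxr => hx.2.2 (hrepRem hxr)⟩
          have hcd : (((Tst e.1 e.2) ∩ S) \ rep ((Tst e.1 e.2) ∩ S)).card
              = ((Tst e.1 e.2) ∩ S).card - min r ((Tst e.1 e.2) ∩ S).card := by
            rw [Finset.card_sdiff_of_subset (hrepsub _), hrepcard]
          have hle := Finset.card_le_card hsub
          have hTS : ((Tst e.1 e.2) ∩ S).card ≤ (Tst e.1 e.2).card :=
            Finset.card_le_card Finset.inter_subset_left
          omega
        · push_neg at hbad
          have hsub : (Tst e.1 e.2) ∩ S' ⊆ (Tst e.1 e.2) ∩ S := by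
            refine Finset.inter_subset_inter (Finset.Subset.refl _) ?_
            rw [hS']
            exact Finset.sdiff_subset
          have := Finset.card_le_card hsub
          omega
      have hTC : (Tst e.1 e.2) ∩ (Finset.univ \ S') = (Tst e.1 e.2) \ S' := by
        ext x
        simp [Finset.mem_inter, Finset.mem_sdiff]
      have hsplit2 := Finset.card_inter_add_card_sdiff (Tst e.1 e.2) S'
      rw [← hTeq, hTC]
      omega
    · -- cardinality bound
      have hS'n : S'.card ≤ n := by
        have h := Finset.card_le_card (Finset.subset_univ S')
        rwa [Finset.card_univ] at h
      have hCcard : (Finset.univ \ S').card = n - S'.card := by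
        rw [Finset.card_sdiff_of_subset (Finset.subset_univ _), Finset.card_univ]
      have hRemle : (Rem.card : ℝ) ≤ (r:ℝ) * ∑ e ∈ ev, bd e S := by
        have h1 : Rem.card ≤ ∑ e ∈ ev,
            (if (Tst e.1 e.2).card - r + 1 ≤ ((Tst e.1 e.2) ∩ S).card
             then rep ((Tst e.1 e.2) ∩ S) else ∅).card := by
          rw [hRem]
          exact Finset.card_biUnion_le
        have h2 : ((Rem.card : ℕ) : ℝ) ≤ ∑ e ∈ ev, (r:ℝ) * bd e S := by
          calc ((Rem.card : ℕ) : ℝ) ≤ ((∑ e ∈ ev,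
              (if (Tst e.1 e.2).card - r + 1 ≤ ((Tst e.1 e.2) ∩ S).card
               then rep ((Tst e.1 e.2) ∩ S) else ∅).card : ℕ) : ℝ) := by exact_mod_cast h1
            _ = ∑ e ∈ ev, ((
              (if (Tst e.1 e.2).card - r + 1 ≤ ((Tst e.1 e.2) ∩ S).card
               then rep ((Tst e.1 e.2) ∩ S) else ∅).card : ℕ) : ℝ) := by push_cast; ring
            _ ≤ ∑ e ∈ ev, (r:ℝ) * bd e S := by
                refine Finset.sum_le_sum fun e _ => ?_
                rw [hbd]
                by_cases h : (Tst e.1 e.2).card - r + 1 ≤ ((Tst e.1 e.2) ∩ S).card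
                · simp only [h, if_true, mul_one]
                  have := hrepcard ((Tst e.1 e.2) ∩ S)
                  have hmin : (rep ((Tst e.1 e.2) ∩ S)).card ≤ r := by
                    rw [this]
                    exact min_le_left _ _
                  exact_mod_cast hmin
                · simp [h]
        rw [Finset.mul_sum]
        exact h2
      have hScard : (S.card : ℝ) ≤ (S'.card : ℝ) + (Rem.card : ℝ) := by
        have := Finset.card_le_card_sdiff_add_card (s := S) (t := Rem)
        rw [hS']
        exact_mod_cast this
      have hXS' : tgt ≤ (S'.card : ℝ) := by
        rw [hX] at hXS
        simp only [] at hXS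
        linarith
      -- final arithmetic with rpow identities
      set B : ℝ := ((d:ℝ)+1) * (2*(r:ℝ)) * Dr^(r+2) with hB
      have hDrpow2 : (0:ℝ) < Dr^(r+2) := pow_pos hDr0 _
      have hB0 : (0:ℝ) < B := by rw [hB]; positivity
      have hAB : A ≤ B := by
        rw [hA, hB]
        have hpow : Dr^(r+1) ≤ Dr^(r+2) := pow_le_pow_right₀ hDr1 (by omega)
        have hf : (0:ℝ) ≤ ((d:ℝ)+1) * (2*(r:ℝ)) := by positivity
        exact mul_le_mul_of_nonneg_left hpow hf
      have hB1 : (1:ℝ) ≤ B := le_trans hA1.le hAB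
      have hBp : B ^ (-(1/(d:ℝ))) ≤ p := by
        have h1 : A ^ ((1:ℝ)/((d:ℝ)+1)) ≤ B ^ ((1:ℝ)/((d:ℝ)+1)) :=
          Real.rpow_le_rpow hA0.le hAB (by positivity)
        have h2 : B ^ ((1:ℝ)/((d:ℝ)+1)) ≤ B ^ ((1:ℝ)/(d:ℝ)) := by
          refine Real.rpow_le_rpow_of_exponent_le hB1 ?_
          exact one_div_le_one_div_of_le hdpos (by linarith)
        have h3 : (0:ℝ) < A ^ ((1:ℝ)/((d:ℝ)+1)) := Real.rpow_pos_of_pos hA0 _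
        have h4 := inv_anti₀ h3 (le_trans h1 h2)
        have h5 : B ^ (-(1/(d:ℝ))) = (B ^ ((1:ℝ)/(d:ℝ)))⁻¹ := by
          rw [Real.rpow_neg hB0.le]
        have h6 : p = (A ^ ((1:ℝ)/((d:ℝ)+1)))⁻¹ := by
          rw [hp, show (-(1:ℝ)/((d:ℝ)+1)) = -((1:ℝ)/((d:ℝ)+1)) from by ring,
            Real.rpow_neg hA0.le]
        rw [h5, h6]
        exact h4
      have hepsn : ((d:ℝ) * ((d:ℝ) + 1) ^ (-(1:ℝ) - 1 / (d:ℝ)) * (2 * (r:ℝ)) ^ (-(1:ℝ) / (d:ℝ)))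
            / Dr ^ (((r:ℝ) + 2) / (d:ℝ))
          = ((d:ℝ)/((d:ℝ)+1)) * B ^ (-(1/(d:ℝ))) := by
        rw [hB]
        rw [Real.mul_rpow (by positivity) (by positivity),
          Real.mul_rpow (by positivity) (by positivity)]
        rw [show (-(1:ℝ) - 1/(d:ℝ)) = (-1) + (-(1/(d:ℝ))) from by ring,
          Real.rpow_add hd1pos, Real.rpow_neg_one]
        rw [show (-(1:ℝ)/(d:ℝ)) = -(1/(d:ℝ)) from by ring]
        rw [show ((r:ℝ)+2)/(d:ℝ) = (((r+2:ℕ)) : ℝ) * (1/(d:ℝ)) from by push_cast; ring]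
        rw [Real.rpow_mul hDr0.le, Real.rpow_natCast]
        rw [Real.rpow_neg hDrpow2.le]
        have hx1 : (0:ℝ) < (Dr^(r+2)) ^ ((1:ℝ)/(d:ℝ)) := Real.rpow_pos_of_pos hDrpow2 _
        field_simp
        rw [Real.mul_rpow (by positivity) (by positivity),
          Real.mul_rpow (x := (d:ℝ)+1) (y := 2) (by positivity) (by norm_num)]
      -- conclude
      have hfin : ((Finset.univ \ S').card : ℝ) = (n:ℝ) - (S'.card : ℝ) := by
        rw [hCcard, Nat.cast_sub hS'n]
      rw [hfin]
      have heps_le : ((d:ℝ) * ((d:ℝ) + 1) ^ (-(1:ℝ) - 1 / (d:ℝ)) * (2 * (r:ℝ)) ^ (-(1:ℝ) / (d:ℝ)))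
            / Dr ^ (((r:ℝ) + 2) / (d:ℝ)) ≤ p * ((d:ℝ)/((d:ℝ)+1)) := by
        rw [hepsn]
        calc ((d:ℝ)/((d:ℝ)+1)) * B ^ (-(1/(d:ℝ)))
            ≤ ((d:ℝ)/((d:ℝ)+1)) * p := by
              refine mul_le_mul_of_nonneg_left hBp (by positivity)
          _ = p * ((d:ℝ)/((d:ℝ)+1)) := by ring
      have hn0 : (0:ℝ) ≤ (n:ℝ) := by positivity
      have hfin2 : (n:ℝ) * (((d:ℝ) * ((d:ℝ) + 1) ^ (-(1:ℝ) - 1 / (d:ℝ))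
            * (2 * (r:ℝ)) ^ (-(1:ℝ) / (d:ℝ))) / Dr ^ (((r:ℝ) + 2) / (d:ℝ)))
          ≤ (n:ℝ) * (p * ((d:ℝ)/((d:ℝ)+1))) := mul_le_mul_of_nonneg_left heps_le hn0
      have htgt2 : (n:ℝ) * (p * ((d:ℝ)/((d:ℝ)+1))) = tgt := by rw [htgt]; ring
      nlinarith [hXS', hfin2]
  · -- lower bound
    intro C hC
    have hdom : ∀ v : V, ∃ x ∈ C, v ∈ Nv x := by
      intro v
      obtain ⟨u, hu⟩ := hex v
      have hx := hC u v hu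
      have hne : ((Nv v \ Nv u) ∩ C).Nonempty :=
        Finset.card_pos.mp (lt_of_lt_of_le (by omega) hx)
      obtain ⟨x, hx2⟩ := hne
      rw [Finset.mem_inter, Finset.mem_sdiff] at hx2
      exact ⟨x, hx2.2, hNvsymm x v hx2.1.1⟩
    have hcover : (Finset.univ : Finset V) ⊆ C.biUnion Nv := by
      intro v _
      obtain ⟨x, hx, hvx⟩ := hdom v
      exact Finset.mem_biUnion.mpr ⟨x, hx, hvx⟩
    have hcount : n ≤ C.card * Dn := by
      calc n = (Finset.univ : Finset V).card := (Finset.card_univ).symm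
        _ ≤ (C.biUnion Nv).card := Finset.card_le_card hcover
        _ ≤ ∑ x ∈ C, (Nv x).card := Finset.card_biUnion_le
        _ ≤ ∑ x ∈ C, Dn := Finset.sum_le_sum fun x _ => hNvcard x
        _ = C.card * Dn := by rw [Finset.sum_const, smul_eq_mul]
    have hD0 : (0:ℝ) < (G.maxDegree : ℝ) + 1 := by positivity
    rw [div_le_iff₀ hD0]
    have : (n : ℝ) ≤ (C.card : ℝ) * (Dn : ℝ) := by exact_mod_cast hcount
    calc (n:ℝ) ≤ (C.card : ℝ) * (Dn : ℝ) := this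
      _ = (C.card : ℝ) * ((G.maxDegree : ℝ) + 1) := by
          congr 1
          rw [hDn]; push_cast; ring
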